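/- Let β > 0 and 0 < c < 1 be real, n a natural number, and x a complex number. Then the Meixner polynomial satisfies the identity (β)_n · c^n · M_n(x;β,c) = ∑_{k=0}^n [(1)_n/(1)_k] · (x+β)_k · (−x)_{n−k} · c^k/(n−k)!. -/

import Mathlib

open Filter Topology Finset

/-- The Pochhammer symbol (rising factorial) `(u)_k = u (u+1) ⋯ (u+k-1)`, with `(u)_0 = 1`. -/
noncomputable def poch (u : ℂ) (k : ℕ) : ℂ := ∏ i ∈ range k, (u + i)

lemma poch_zero (u : ℂ) : poch u 0 = 1 := by simp [poch]

lemma poch_succ (u : ℂ) (k : ℕ) : poch u (k+1) = poch u k * (u + k) := by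
  simp [poch, prod_range_succ]

lemma poch_succ_left (u : ℂ) (k : ℕ) : poch u (k+1) = u * poch (u+1) k := by
  simp only [poch]
  rw [prod_range_succ']
  push_cast
  rw [add_zero, mul_comm]
  congr 1
  exact prod_congr rfl fun i _ => by ring

lemma poch_add (u : ℂ) (m l : ℕ) : poch u (m + l) = poch u m * poch (u + m) l := by
  induction l with
  | zero => simp [poch_zero]
  | succ l ih => rw [← add_assoc, poch_succ, ih, poch_succ, mul_assoc]; push_cast; ring_nf

lemma poch_eq_desc (u : ℂ) (k : ℕ) : poch u k = (descPochhammer ℂ k).eval (u + k - 1) := by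
  induction k generalizing u with
  | zero => simp [poch_zero]
  | succ k ih =>
    rw [show u + ((k+1:ℕ):ℂ) - 1 = u + (k:ℂ) by push_cast; ring, descPochhammer_succ_eval,
      show u + (k:ℂ) = (u+1) + (k:ℂ) - 1 by ring, ← ih (u+1), poch_succ_left]
    ring

lemma desc_eval_neg (a : ℂ) (k : ℕ) :
    (descPochhammer ℂ k).eval (-a) = (-1)^k * poch a k := by
  induction k with
  | zero => simp [poch_zero]
  | succ k ih => rw [descPochhammer_succ_eval, ih, poch_succ]; ring

lemma desc_smeval_eq_eval (k : ℕ) (x : ℂ) :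
    (descPochhammer ℤ k).smeval x = (descPochhammer ℂ k).eval x := by
  rw [← Polynomial.aeval_eq_smeval, Polynomial.aeval_def, ← Polynomial.eval_map,
    descPochhammer_map]

lemma desc_add_eval (r s : ℂ) (k : ℕ) :
    (descPochhammer ℂ k).eval (r + s) = ∑ m ∈ range (k+1),
      (k.choose m : ℂ) * ((descPochhammer ℂ m).eval r * (descPochhammer ℂ (k-m)).eval s) := by
  have h := Ring.descPochhammer_smeval_add (R := ℂ) (r := r) (s := s) k (Commute.all r s)
  rw [desc_smeval_eq_eval] at h
  rw [h, Finset.Nat.sum_antidiagonal_eq_sum_range_succ_mk]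
  exact sum_congr rfl fun m _ => by rw [desc_smeval_eq_eval, desc_smeval_eq_eval]

lemma vander (a b : ℂ) (k : ℕ) :
    poch (b - a) k = ∑ m ∈ range (k+1),
      (-1)^m * (k.choose m : ℂ) * poch a m * poch (b + m) (k - m) := by
  have h : poch (b - a) k = (descPochhammer ℂ k).eval ((-a) + (b + k - 1)) := by
    rw [poch_eq_desc]; ring_nf
  rw [h, desc_add_eval]
  refine sum_congr rfl fun m hm => ?_
  have hmk : m ≤ k := Nat.lt_succ_iff.mp (mem_range.mp hm)
  rw [desc_eval_neg, poch_eq_desc (b + m) (k - m)]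
  have : b + (m:ℂ) + ((k - m : ℕ):ℂ) - 1 = b + (k:ℂ) - 1 := by
    rw [Nat.cast_sub hmk]; ring
  rw [this]
  ring

lemma poch_one_eq (n : ℕ) : poch 1 n = (n.factorial : ℂ) := by
  induction n with
  | zero => simp [poch_zero]
  | succ n ih => rw [poch_succ, ih, Nat.factorial_succ]; push_cast; ring

lemma poch_neg_nat (n j : ℕ) :
    poch (-(n:ℂ)) j = (-1)^j * ((j.factorial : ℂ) * (n.choose j : ℂ)) := by
  have h := desc_eval_neg (-(n:ℂ)) j
  rw [neg_neg] at h
  have h2 : (descPochhammer ℂ j).eval ((n:ℂ)) = (n.descFactorial j : ℂ) := by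
    exact_mod_cast descPochhammer_eval_eq_descFactorial ℂ n j
  rw [h2, Nat.descFactorial_eq_factorial_mul_choose] at h
  have : poch (-(n:ℂ)) j = (-1)^j * (-1)^j * poch (-(n:ℂ)) j := by
    rw [← mul_pow]; ring_nf
  rw [this, mul_assoc, ← h]
  push_cast
  ring

lemma poch_ne_zero {β : ℝ} (hβ : 0 < β) (j : ℕ) : poch (β:ℂ) j ≠ 0 := by
  rw [poch]
  apply prod_ne_zero_iff.mpr
  intro i _
  have : ((β:ℂ) + i) = ((β + i : ℝ) : ℂ) := by push_cast; ring
  rw [this]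
  exact_mod_cast (by positivity : (0:ℝ) < β + i).ne'

/-- The Meixner polynomial
`M_n(x; β, c) = ∑_{j=0}^n (−n)_j (−x)_j / ((β)_j j!) · (1 − 1/c)^j`. -/
noncomputable def meixner (β c : ℝ) (n : ℕ) (x : ℂ) : ℂ :=
  ∑ j ∈ range (n + 1),
    poch (-(n : ℂ)) j * poch (-x) j / (poch (β : ℂ) j * (j.factorial : ℂ)) *
      (1 - 1 / (c : ℂ)) ^ j

/-- For `β > 0`, `0 < c < 1`, every `n : ℕ` and every complex `x`,
`(β)_n cⁿ M_n(x;β,c) = ∑_{k=0}^n (1)_n/(1)_k · (x+β)_k (−x)_{n−k} c^k / (n−k)!`. -/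
theorem meixner_identity (β c : ℝ) (hβ : 0 < β) (hc0 : 0 < c) (hc1 : c < 1)
    (n : ℕ) (x : ℂ) :
    poch (β : ℂ) n * (c : ℂ) ^ n * meixner β c n x =
      ∑ k ∈ range (n + 1),
        poch 1 n / poch 1 k * poch (x + (β : ℂ)) k * poch (-x) (n - k) *
          (c : ℂ) ^ k / ((n - k).factorial : ℂ) := by
  have hc0' : (c:ℂ) ≠ 0 := by exact_mod_cast hc0.ne'
  rw [meixner, mul_sum]
  have hL : ∀ j ∈ range (n+1),
      poch (β:ℂ) n * (c:ℂ)^n * (poch (-(n:ℂ)) j * poch (-x) j /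
          (poch (β:ℂ) j * (j.factorial:ℂ)) * (1 - 1/(c:ℂ))^j) =
      (n.choose j : ℂ) * poch (-x) j * poch ((β:ℂ)+j) (n-j) * (c:ℂ)^(n-j) * (1-(c:ℂ))^j := by
    intro j hj
    have hjn : j ≤ n := Nat.lt_succ_iff.mp (mem_range.mp hj)
    have h1 : poch (β:ℂ) n = poch (β:ℂ) j * poch ((β:ℂ)+j) (n-j) := by
      rw [← poch_add]; congr 1; omega
    have h2 : (c:ℂ)^n = (c:ℂ)^j * (c:ℂ)^(n-j) := by rw [← pow_add]; congr 1; omega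
    have h3 : (c:ℂ)^j * (1 - 1/(c:ℂ))^j = (-1)^j * (1-(c:ℂ))^j := by
      rw [← mul_pow, ← mul_pow]
      congr 1
      field_simp
      ring
    have hfac : (j.factorial : ℂ) ≠ 0 := by exact_mod_cast j.factorial_ne_zero
    have hpj := poch_ne_zero hβ j
    have hD : poch (β:ℂ) j * (j.factorial:ℂ) ≠ 0 := mul_ne_zero hpj hfac
    have he : (1 - 1/(c:ℂ))^j * (c:ℂ)^j = (-1)^j * (1-(c:ℂ))^j := by
      rw [← mul_pow, ← mul_pow]
      congr 1
      field_simp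
      ring
    have hneg : (-1:ℂ)^j * (-1:ℂ)^j = 1 := by rw [← mul_pow]; norm_num
    rw [div_mul_eq_mul_div, ← mul_div_assoc, div_eq_iff hD, poch_neg_nat, h1, h2]
    linear_combination (poch (β:ℂ) j * poch ((β:ℂ)+j) (n-j) * (c:ℂ)^(n-j) * (j.factorial:ℂ) *
        (n.choose j : ℂ) * poch (-x) j * (-1:ℂ)^j) * he +
      (poch (β:ℂ) j * poch ((β:ℂ)+j) (n-j) * (c:ℂ)^(n-j) * (j.factorial:ℂ) *
        (n.choose j : ℂ) * poch (-x) j * (1-(c:ℂ))^j) * hneg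
  rw [sum_congr rfl hL]
  have hRsum : (∑ k ∈ range (n + 1),
        poch 1 n / poch 1 k * poch (x + (β : ℂ)) k * poch (-x) (n - k) *
          (c : ℂ) ^ k / ((n - k).factorial : ℂ)) =
      ∑ k ∈ range (n+1),
        (n.choose k : ℂ) * poch (x + (β:ℂ)) k * poch (-x) (n-k) * (c:ℂ)^k := by
    refine sum_congr rfl fun k hk => ?_
    have hkn : k ≤ n := Nat.lt_succ_iff.mp (mem_range.mp hk)
    rw [poch_one_eq, poch_one_eq, Nat.cast_choose ℂ hkn]
    have h1 : (k.factorial : ℂ) ≠ 0 := by exact_mod_cast k.factorial_ne_zero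
    have h2 : ((n-k).factorial : ℂ) ≠ 0 := by exact_mod_cast (n-k).factorial_ne_zero
    field_simp

  rw [hRsum]
  have hexp : ∀ j ∈ range (n+1),
      (n.choose j : ℂ) * poch (-x) j * poch ((β:ℂ)+j) (n-j) * (c:ℂ)^(n-j) * (1-(c:ℂ))^j =
      ∑ i ∈ range (j+1), (n.choose j : ℂ) * poch (-x) j * poch ((β:ℂ)+j) (n-j) * (c:ℂ)^(n-j)
        * ((-(c:ℂ))^i * (j.choose i : ℂ)) := by
    intro j _
    rw [show (1-(c:ℂ)) = (-(c:ℂ)) + 1 by ring, (Commute.all (-(c:ℂ)) 1).add_pow, mul_sum]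
    exact sum_congr rfl fun i _ => by rw [one_pow, mul_one]
  rw [sum_congr rfl hexp]
  have key : ∀ k ∈ range (n+1),
      (∑ m ∈ range (k+1), (n.choose (n-k+m) : ℂ) * poch (-x) (n-k+m) *
        poch ((β:ℂ)+((n-k+m : ℕ):ℂ)) (n-(n-k+m)) * (c:ℂ)^(n-(n-k+m)) *
        ((-(c:ℂ))^m * ((n-k+m).choose m : ℂ))) =
      (n.choose k : ℂ) * poch (x+(β:ℂ)) k * poch (-x) (n-k) * (c:ℂ)^k := by
    intro k hk
    have hkn : k ≤ n := Nat.lt_succ_iff.mp (mem_range.mp hk)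
    have step : ∀ m ∈ range (k+1),
        (n.choose (n-k+m) : ℂ) * poch (-x) (n-k+m) *
          poch ((β:ℂ)+((n-k+m : ℕ):ℂ)) (n-(n-k+m)) * (c:ℂ)^(n-(n-k+m)) *
          ((-(c:ℂ))^m * ((n-k+m).choose m : ℂ)) =
        ((n.choose k:ℂ) * poch (-x) (n-k) * (c:ℂ)^k) *
          ((-1)^m * (k.choose m : ℂ) * poch (-x+((n-k:ℕ):ℂ)) m *
            poch (((β:ℂ)+((n-k:ℕ):ℂ))+(m:ℂ)) (k-m)) := by
      intro m hm
      have hmk : m ≤ k := Nat.lt_succ_iff.mp (mem_range.mp hm)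
      have e1 : n - k + m ≤ n := by omega
      have e2 : n - (n-k+m) = k - m := by omega
      have e3 : ((n-k+m : ℕ):ℂ) = ((n-k:ℕ):ℂ) + (m:ℂ) := by push_cast; ring
      have hcc : n.choose (n-k+m) * ((n-k+m).choose m) = n.choose k * k.choose m := by
        rw [← Nat.choose_symm_add, Nat.choose_mul (n := n) (Nat.le_add_right _ _),
          Nat.choose_symm hkn, show n-(n-k) = k by omega, show n-k+m-(n-k) = m by omega]
      have hcc' : (n.choose (n-k+m) : ℂ) * ((n-k+m).choose m : ℂ) =
          (n.choose k:ℂ) * (k.choose m:ℂ) := by exact_mod_cast hcc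
      have hcp : (c:ℂ)^(k-m) * (-(c:ℂ))^m = (-1)^m * (c:ℂ)^k := by
        rw [neg_pow, show (c:ℂ)^k = (c:ℂ)^(k-m) * (c:ℂ)^m from by
          rw [← pow_add]; congr 1; omega]
        ring
      rw [e2, poch_add (-x) (n-k) m, e3]
      calc (n.choose (n-k+m) : ℂ) * (poch (-x) (n-k) * poch (-x+((n-k:ℕ):ℂ)) m) *
            poch ((β:ℂ)+(((n-k:ℕ):ℂ) + (m:ℂ))) (k-m) * (c:ℂ)^(k-m) *
            ((-(c:ℂ))^m * ((n-k+m).choose m : ℂ))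
          = ((n.choose (n-k+m) : ℂ) * ((n-k+m).choose m : ℂ)) *
              ((c:ℂ)^(k-m) * (-(c:ℂ))^m) *
              (poch (-x) (n-k) * poch (-x+((n-k:ℕ):ℂ)) m *
                poch ((β:ℂ)+(((n-k:ℕ):ℂ) + (m:ℂ))) (k-m)) := by ring
        _ = ((n.choose k:ℂ) * (k.choose m:ℂ)) * ((-1)^m * (c:ℂ)^k) *
              (poch (-x) (n-k) * poch (-x+((n-k:ℕ):ℂ)) m *
                poch ((β:ℂ)+(((n-k:ℕ):ℂ) + (m:ℂ))) (k-m)) := by rw [hcc', hcp]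
        _ = ((n.choose k:ℂ) * poch (-x) (n-k) * (c:ℂ)^k) *
              ((-1)^m * (k.choose m : ℂ) * poch (-x+((n-k:ℕ):ℂ)) m *
                poch (((β:ℂ)+((n-k:ℕ):ℂ))+(m:ℂ)) (k-m)) := by rw [add_assoc]; ring
    rw [sum_congr rfl step, ← mul_sum, ← vander (-x+((n-k:ℕ):ℂ)) ((β:ℂ)+((n-k:ℕ):ℂ)) k,
      show ((β:ℂ)+((n-k:ℕ):ℂ)) - (-x+((n-k:ℕ):ℂ)) = x + (β:ℂ) by ring]
    ring
  rw [← sum_congr rfl key, sum_sigma', sum_sigma']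
  refine sum_bij' (fun a _ => ⟨n - a.1 + a.2, a.2⟩) (fun a _ => ⟨n - a.1 + a.2, a.2⟩)
    ?_ ?_ ?_ ?_ ?_
  · rintro ⟨j, i⟩ ha
    simp only [mem_sigma, mem_range] at ha ⊢
    omega
  · rintro ⟨k, m⟩ ha
    simp only [mem_sigma, mem_range] at ha ⊢
    omega
  · rintro ⟨j, i⟩ ha
    simp only [mem_sigma, mem_range] at ha
    simp only [Sigma.mk.inj_iff]
    exact ⟨by omega, HEq.rfl⟩
  · rintro ⟨k, m⟩ ha
    simp only [mem_sigma, mem_range] at ha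
    simp only [Sigma.mk.inj_iff]
    exact ⟨by omega, HEq.rfl⟩
  · rintro ⟨j, i⟩ ha
    simp only [mem_sigma, mem_range] at ha
    have h1 : n - (n - j + i) + i = j := by omega
    simp only [h1]
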